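/- Every separating triangle of an Apollonian network T gives rise to a subgraph of T isomorphic to K_{2,3} in which the two vertices of the partition set of size two are not adjacent in T. More precisely, if (v1,v2,v3) is a separating triangle of T, then there exist two non-adjacent vertices v and w of T, each adjacent to all of v1, v2, v3. -/

import Mathlib

open SimpleGraph

/-- The complete graph `K4` on the vertices `{0,1,2,3}` of `ℕ`. -/
def K4n : SimpleGraph ℕ where
  Adj x y := x ≠ y ∧ x < 4 ∧ y < 4
  symm := ⟨fun _ _ h => ⟨h.1.symm, h.2.2, h.2.1⟩⟩
  loopless := ⟨fun _ h => h.1 rfl⟩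

/-- Add a new apex vertex `v` joined to the three vertices `a`, `b`, `c`. -/
def addApex (G : SimpleGraph ℕ) (v a b c : ℕ) : SimpleGraph ℕ :=
  G ⊔ SimpleGraph.fromEdgeSet {s(v, a), s(v, b), s(v, c)}

/-- `ApollonianF G Fs` : `G` is an Apollonian network with set of (triangular) faces `Fs`,
built from `K4` by recursively subdividing a triangular face. -/
inductive ApollonianF : SimpleGraph ℕ → Set (Finset ℕ) → Prop
  | base : ApollonianF K4n {{0, 1, 2}, {0, 1, 3}, {0, 2, 3}, {1, 2, 3}}
  | subdivide (G : SimpleGraph ℕ) (Fs : Set (Finset ℕ)) (a b c v : ℕ) :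
      ApollonianF G Fs → ({a, b, c} : Finset ℕ) ∈ Fs →
      (∀ y, ¬ G.Adj v y) →
      ApollonianF (addApex G v a b c)
        ((Fs \ {({a, b, c} : Finset ℕ)}) ∪ {{v, a, b}, {v, a, c}, {v, b, c}})

/-- A graph (on vertex set its support) is an Apollonian network. -/
def IsApollonian (G : SimpleGraph ℕ) : Prop := ∃ Fs, ApollonianF G Fs

/-- The triangles (sets of three pairwise adjacent vertices) of `G`. -/
def triangleSet (G : SimpleGraph ℕ) : Set (Finset ℕ) :=
  {t | ∃ a b c : ℕ, t = {a, b, c} ∧ G.Adj a b ∧ G.Adj a c ∧ G.Adj b c}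

/-- A triangle is separating if deleting its vertices disconnects the graph. -/
def IsSeparatingTriangle (G : SimpleGraph ℕ) (t : Finset ℕ) : Prop :=
  t ∈ triangleSet G ∧ ¬ (G.induce (G.support \ ↑t)).Connected

/-- `G` is (isomorphic to) the complete graph on four vertices. -/
def IsK4Graph (G : SimpleGraph ℕ) : Prop :=
  ∃ s : Finset ℕ, ↑s = G.support ∧ s.card = 4 ∧ ∀ a ∈ s, ∀ b ∈ s, a ≠ b → G.Adj a b

/-- Delete the vertex `v` (and all incident edges). -/
def deleteVertex (G : SimpleGraph ℕ) (v : ℕ) : SimpleGraph ℕ where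
  Adj x y := G.Adj x y ∧ x ≠ v ∧ y ≠ v
  symm := ⟨fun _ _ h => ⟨h.1.symm, h.2.2, h.2.1⟩⟩
  loopless := ⟨fun x h => G.irrefl h.1⟩

-- helper lemmas

lemma connected_of_complete (G : SimpleGraph ℕ) (A : Set ℕ) (hne : A.Nonempty)
    (h : ∀ u ∈ A, ∀ w ∈ A, u ≠ w → G.Adj u w) : (G.induce A).Connected := by
  rw [connected_iff]
  refine ⟨?_, ⟨⟨hne.choose, hne.choose_spec⟩⟩⟩
  rintro ⟨u, hu⟩ ⟨w, hw⟩
  by_cases huw : u = w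
  · subst huw; rfl
  · exact (SimpleGraph.Adj.reachable (by exact h u hu w hw huw))

lemma connected_insert (G G' : SimpleGraph ℕ) (hle : G ≤ G') (A : Set ℕ)
    (hA : (G.induce A).Connected) (v x : ℕ) (hx : x ∈ A) (hadj : G'.Adj v x) :
    (G'.induce (insert v A)).Connected := by
  rw [connected_iff]
  have hxm : x ∈ insert v A := Set.mem_insert_of_mem _ hx
  refine ⟨?_, ⟨⟨v, Set.mem_insert _ _⟩⟩⟩
  let hom : G.induce A →g G'.induce (insert v A) :=
    ⟨fun p => ⟨p.1, Set.mem_insert_of_mem _ p.2⟩, fun h => hle h⟩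
  have key : ∀ u (hu : u ∈ A), (G'.induce (insert v A)).Reachable
      ⟨u, Set.mem_insert_of_mem _ hu⟩ ⟨x, hxm⟩ := by
    intro u hu
    exact (hA.preconnected ⟨u, hu⟩ ⟨x, hx⟩).map hom
  rintro ⟨u, hu⟩ ⟨w, hw⟩
  have step : ∀ z (hz : z ∈ insert v A),
      (G'.induce (insert v A)).Reachable ⟨z, hz⟩ ⟨x, hxm⟩ := by
    intro z hz
    rcases hz with rfl | hz
    · exact SimpleGraph.Adj.reachable (by exact hadj)
    · exact key z hz
  exact (step u hu).trans (step w hw).symm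

lemma triple_rot (x y z : ℕ) : ({x, y, z} : Finset ℕ) = {z, x, y} := by
  ext u; simp; tauto

lemma card3' {x y z : ℕ} (hxy : x ≠ y) (hxz : x ≠ z) (hyz : y ≠ z) :
    ({x, y, z} : Finset ℕ).card = 3 := by
  rw [Finset.card_insert_of_notMem (by simp [hxy, hxz]),
      Finset.card_insert_of_notMem (by simp [hyz])]
  rfl

lemma card3ne {x y z : ℕ} (h : ({x, y, z} : Finset ℕ).card = 3) :
    x ≠ y ∧ x ≠ z ∧ y ≠ z := by
  have k1 : ∀ u w : ℕ, ({u, u, w} : Finset ℕ).card ≤ 2 := by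
    intro u w
    rw [Finset.insert_idem]
    exact (Finset.card_insert_le _ _).trans (by simp)
  have k2 : ∀ u w : ℕ, ({u, w, u} : Finset ℕ).card ≤ 2 := by
    intro u w
    rw [show ({u, w, u} : Finset ℕ) = {u, w} from by ext; simp; try tauto]
    exact (Finset.card_insert_le _ _).trans (by simp)
  have k3 : ∀ u w : ℕ, ({u, w, w} : Finset ℕ).card ≤ 2 := by
    intro u w
    rw [show ({u, w, w} : Finset ℕ) = {u, w} from by ext; simp; try tauto]
    exact (Finset.card_insert_le _ _).trans (by simp)
  refine ⟨fun heq => ?_, fun heq => ?_, fun heq => ?_⟩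
  · rw [heq] at h; have := k1 y z; omega
  · rw [heq] at h; have := k2 z y; omega
  · rw [heq] at h; have := k3 x z; omega

lemma addApex_adj (G : SimpleGraph ℕ) {v a b c : ℕ} (hva : v ≠ a) (hvb : v ≠ b)
    (hvc : v ≠ c) (x y : ℕ) :
    (addApex G v a b c).Adj x y ↔ G.Adj x y ∨ (x = v ∧ (y = a ∨ y = b ∨ y = c)) ∨
      (y = v ∧ (x = a ∨ x = b ∨ x = c)) := by
  simp only [addApex, sup_adj, fromEdgeSet_adj, Set.mem_insert_iff, Set.mem_singleton_iff,
    Sym2.eq, Sym2.rel_iff', Prod.mk.injEq, Prod.swap_prod_mk]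
  aesop

lemma K4n_support : K4n.support = {x | x < 4} := by
  ext x
  simp only [SimpleGraph.mem_support, Set.mem_setOf_eq]
  constructor
  · rintro ⟨y, -, hx, -⟩; exact hx
  · intro hx
    by_cases h0 : x = 0
    · exact ⟨1, by omega, by omega, by omega⟩
    · exact ⟨0, by omega, by omega, by omega⟩

def ApolloInv (G : SimpleGraph ℕ) (Fs : Set (Finset ℕ)) : Prop :=
  (∀ t ∈ Fs, t.card = 3 ∧ (∀ u ∈ t, ∀ u' ∈ t, u ≠ u' → G.Adj u u') ∧
    ∃ w, ∀ u ∈ t, G.Adj w u) ∧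
  (∀ a b c : ℕ, G.Adj a b → G.Adj a c → G.Adj b c → ({a, b, c} : Finset ℕ) ∉ Fs →
    ∃ v w : ℕ, v ≠ w ∧ ¬ G.Adj v w ∧ G.Adj v a ∧ G.Adj v b ∧ G.Adj v c ∧
      G.Adj w a ∧ G.Adj w b ∧ G.Adj w c) ∧
  (∀ t ∈ Fs, ∀ s : Finset ℕ, s ⊆ t → (G.induce (G.support \ ↑s)).Connected)

set_option maxHeartbeats 1600000 in
theorem apollonian_inv {G : SimpleGraph ℕ} {Fs : Set (Finset ℕ)}
    (h : ApollonianF G Fs) : ApolloInv G Fs := by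
  induction h with
  | base =>
    refine ⟨?_, ?_, ?_⟩
    · intro t ht
      have hcases : t = {0,1,2} ∨ t = {0,1,3} ∨ t = {0,2,3} ∨ t = {1,2,3} := by
        simpa [Set.mem_insert_iff] using ht
      have hgen : ∀ x y z : ℕ, x < 4 → y < 4 → z < 4 → x ≠ y → x ≠ z → y ≠ z →
          ∀ w, w < 4 → w ≠ x → w ≠ y → w ≠ z →
          ({x,y,z} : Finset ℕ).card = 3 ∧
          (∀ u ∈ ({x,y,z} : Finset ℕ), ∀ u' ∈ ({x,y,z} : Finset ℕ), u ≠ u' → K4n.Adj u u') ∧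
          ∃ w', ∀ u ∈ ({x,y,z} : Finset ℕ), K4n.Adj w' u := by
        intro x y z hx hy hz hxy hxz hyz w hw hwx hwy hwz
        refine ⟨card3' hxy hxz hyz, ?_, ⟨w, ?_⟩⟩
        · intro u hu u' hu' hne
          simp only [Finset.mem_insert, Finset.mem_singleton] at hu hu'
          refine ⟨hne, ?_, ?_⟩ <;> rcases hu with rfl|rfl|rfl <;>
            rcases hu' with rfl|rfl|rfl <;> omega
        · intro u hu
          simp only [Finset.mem_insert, Finset.mem_singleton] at hu
          rcases hu with rfl|rfl|rfl <;> exact ⟨by omega, by omega, by omega⟩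
      rcases hcases with rfl|rfl|rfl|rfl
      · exact hgen 0 1 2 (by omega) (by omega) (by omega) (by omega) (by omega) (by omega)
          3 (by omega) (by omega) (by omega) (by omega)
      · exact hgen 0 1 3 (by omega) (by omega) (by omega) (by omega) (by omega) (by omega)
          2 (by omega) (by omega) (by omega) (by omega)
      · exact hgen 0 2 3 (by omega) (by omega) (by omega) (by omega) (by omega) (by omega)
          1 (by omega) (by omega) (by omega) (by omega)
      · exact hgen 1 2 3 (by omega) (by omega) (by omega) (by omega) (by omega) (by omega)
          0 (by omega) (by omega) (by omega) (by omega)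
    · intro a b c hab hac hbc hnot
      exfalso
      apply hnot
      obtain ⟨nab, ha, hb⟩ := hab
      obtain ⟨nac, -, hc⟩ := hac
      obtain ⟨nbc, -, -⟩ := hbc
      simp only [Set.mem_insert_iff, Set.mem_singleton_iff]
      interval_cases a <;> interval_cases b <;> interval_cases c <;>
        first
          | exact absurd rfl nab
          | exact absurd rfl nac
          | exact absurd rfl nbc
          | decide
    · intro t ht s hs
      have hcard : s.card ≤ 3 := by
        have h3 : t.card = 3 := by
          rcases (by simpa [Set.mem_insert_iff] using ht :
            t = {0,1,2} ∨ t = {0,1,3} ∨ t = {0,2,3} ∨ t = {1,2,3}) with rfl|rfl|rfl|rfl <;> decide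
        exact h3 ▸ Finset.card_le_card hs
      have hex : ∃ m, m < 4 ∧ m ∉ s := by
        by_contra hcon
        push_neg at hcon
        have hsub : ({0,1,2,3} : Finset ℕ) ⊆ s := by
          intro m hm
          simp only [Finset.mem_insert, Finset.mem_singleton] at hm
          apply hcon; omega
        have := Finset.card_le_card hsub
        simp at this; omega
      obtain ⟨m, hm4, hms⟩ := hex
      rw [K4n_support]
      apply connected_of_complete
      · exact ⟨m, hm4, hms⟩
      · rintro u ⟨hu4, hus⟩ w ⟨hw4, hws⟩ hne
        exact ⟨hne, hu4, hw4⟩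
  | subdivide G Fs a b c v hap hmem hfresh ih =>
    obtain ⟨inv1, inv2, inv3⟩ := ih
    obtain ⟨hcardabc, htri, w0, hw0⟩ := inv1 _ hmem
    obtain ⟨nab, nac, nbc⟩ := card3ne hcardabc
    have hab : G.Adj a b := htri a (by simp) b (by simp) nab
    have hac : G.Adj a c := htri a (by simp) c (by simp) nac
    have hbc : G.Adj b c := htri b (by simp) c (by simp) nbc
    have hasupp : a ∈ G.support := ⟨b, hab⟩
    have hbsupp : b ∈ G.support := ⟨a, hab.symm⟩
    have hcsupp : c ∈ G.support := ⟨a, hac.symm⟩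
    have hvsupp : v ∉ G.support := by rintro ⟨y, hy⟩; exact hfresh y hy
    have hva : v ≠ a := by rintro rfl; exact hfresh b hab
    have hvb : v ≠ b := by rintro rfl; exact hfresh a hab.symm
    have hvc : v ≠ c := by rintro rfl; exact hfresh a hac.symm
    set G' := addApex G v a b c with hG'
    have hle : G ≤ G' := le_sup_left
    have hadj' : ∀ x y, G'.Adj x y ↔ G.Adj x y ∨ (x = v ∧ (y = a ∨ y = b ∨ y = c)) ∨
        (y = v ∧ (x = a ∨ x = b ∨ x = c)) := addApex_adj G hva hvb hvc
    have hVadj : ∀ x, (x = a ∨ x = b ∨ x = c) → G'.Adj v x := by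
      intro x hx; rw [hadj']; exact Or.inr (Or.inl ⟨rfl, hx⟩)
    have hsupp' : G'.support = insert v G.support := by
      ext x
      simp only [SimpleGraph.mem_support, Set.mem_insert_iff]
      constructor
      · rintro ⟨y, hy⟩
        rw [hadj'] at hy
        rcases hy with h | ⟨rfl, -⟩ | ⟨rfl, hx⟩
        · exact Or.inr ⟨y, h⟩
        · exact Or.inl rfl
        · rcases hx with rfl|rfl|rfl
          · exact Or.inr ⟨b, hab⟩
          · exact Or.inr ⟨a, hab.symm⟩
          · exact Or.inr ⟨a, hac.symm⟩
      · rintro (rfl | ⟨y, hy⟩)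
        · exact ⟨a, hVadj a (Or.inl rfl)⟩
        · exact ⟨y, hle hy⟩
    have hmemFs' : ∀ y z : ℕ, (y = a ∨ y = b ∨ y = c) → (z = a ∨ z = b ∨ z = c) → y ≠ z →
        ({v, y, z} : Finset ℕ) ∈
          (Fs \ {({a, b, c} : Finset ℕ)}) ∪ {{v, a, b}, {v, a, c}, {v, b, c}} := by
      intro y z hy hz hne
      refine Or.inr ?_
      simp only [Set.mem_insert_iff, Set.mem_singleton_iff]
      rcases hy with rfl|rfl|rfl <;> rcases hz with rfl|rfl|rfl
      · exact absurd rfl hne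
      · exact Or.inl rfl
      · exact Or.inr (Or.inl rfl)
      · exact Or.inl (by rw [Finset.pair_comm])
      · exact absurd rfl hne
      · exact Or.inr (Or.inr rfl)
      · exact Or.inr (Or.inl (by rw [Finset.pair_comm]))
      · exact Or.inr (Or.inr (by rw [Finset.pair_comm]))
      · exact absurd rfl hne
    refine ⟨?_, ?_, ?_⟩
    -- Inv1
    · intro t ht
      rcases ht with ⟨htFs, -⟩ | htnew
      · obtain ⟨h1, h2, w, hw⟩ := inv1 t htFs
        exact ⟨h1, fun u hu u' hu' hne => hle (h2 u hu u' hu' hne),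
          ⟨w, fun u hu => hle (hw u hu)⟩⟩
      · have hnf : ∀ p q r : ℕ, p ≠ q → v ≠ p → v ≠ q →
            (p = a ∨ p = b ∨ p = c) → (q = a ∨ q = b ∨ q = c) →
            (r = a ∨ r = b ∨ r = c) → G.Adj p q → G.Adj r p → G.Adj r q →
            ({v, p, q} : Finset ℕ).card = 3 ∧
            (∀ u ∈ ({v, p, q} : Finset ℕ), ∀ u' ∈ ({v, p, q} : Finset ℕ), u ≠ u' →
              G'.Adj u u') ∧ ∃ w', ∀ u ∈ ({v, p, q} : Finset ℕ), G'.Adj w' u := by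
          intro p q r hpq hvp hvq hp hq hr hpqA hrp hrq
          have hvpA : G'.Adj v p := hVadj p hp
          have hvqA : G'.Adj v q := hVadj q hq
          refine ⟨card3' hvp hvq hpq, ?_, ⟨r, ?_⟩⟩
          · intro u hu u' hu' hne
            simp only [Finset.mem_insert, Finset.mem_singleton] at hu hu'
            rcases hu with rfl|rfl|rfl
            · rcases hu' with rfl|rfl|rfl
              · exact absurd rfl hne
              · exact hvpA
              · exact hvqA
            · rcases hu' with rfl|rfl|rfl
              · exact hvpA.symm
              · exact absurd rfl hne
              · exact hle hpqA
            · rcases hu' with rfl|rfl|rfl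
              · exact hvqA.symm
              · exact hle hpqA.symm
              · exact absurd rfl hne
          · intro u hu
            simp only [Finset.mem_insert, Finset.mem_singleton] at hu
            rcases hu with rfl|rfl|rfl
            · exact (hVadj r hr).symm
            · exact hle hrp
            · exact hle hrq
        rcases htnew with rfl|rfl|rfl
        · exact hnf a b c nab hva hvb (Or.inl rfl) (Or.inr (Or.inl rfl))
            (Or.inr (Or.inr rfl)) hab hac.symm hbc.symm
        · exact hnf a c b nac hva hvc (Or.inl rfl) (Or.inr (Or.inr rfl))
            (Or.inr (Or.inl rfl)) hac hab.symm hbc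
        · exact hnf b c a nbc hvb hvc (Or.inr (Or.inl rfl)) (Or.inr (Or.inr rfl))
            (Or.inl rfl) hbc hab hac
    -- Inv2
    · intro x y z hxy hxz hyz hnot
      have nxy : x ≠ y := hxy.ne
      have nxz : x ≠ z := hxz.ne
      have nyz : y ≠ z := hyz.ne
      rw [hadj'] at hxy hxz hyz
      by_cases hx : x = v
      · subst hx
        exfalso
        have hy' : y = a ∨ y = b ∨ y = c := by
          rcases hxy with h | ⟨-, h⟩ | ⟨h, -⟩
          · exact absurd h (hfresh y)
          · exact h
          · exact absurd h.symm nxy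
        have hz' : z = a ∨ z = b ∨ z = c := by
          rcases hxz with h | ⟨-, h⟩ | ⟨h, -⟩
          · exact absurd h (hfresh z)
          · exact h
          · exact absurd h.symm nxz
        exact hnot (hmemFs' y z hy' hz' nyz)
      · by_cases hy : y = v
        · subst hy
          exfalso
          have hx' : x = a ∨ x = b ∨ x = c := by
            rcases hxy with h | ⟨h, -⟩ | ⟨-, h⟩
            · exact absurd h.symm (hfresh x)
            · exact absurd h hx
            · exact h
          have hz' : z = a ∨ z = b ∨ z = c := by
            rcases hyz with h | ⟨-, h⟩ | ⟨h, -⟩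
            · exact absurd h (hfresh z)
            · exact h
            · exact absurd h.symm nyz
          have heq : ({x, y, z} : Finset ℕ) = {y, x, z} := Finset.insert_comm x y {z}
          exact hnot (heq ▸ hmemFs' x z hx' hz' nxz)
        · by_cases hz : z = v
          · subst hz
            exfalso
            have hx' : x = a ∨ x = b ∨ x = c := by
              rcases hxz with h | ⟨h, -⟩ | ⟨-, h⟩
              · exact absurd h.symm (hfresh x)
              · exact absurd h hx
              · exact h
            have hy' : y = a ∨ y = b ∨ y = c := by
              rcases hyz with h | ⟨h, -⟩ | ⟨-, h⟩
              · exact absurd h.symm (hfresh y)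
              · exact absurd h hy
              · exact h
            have heq : ({x, y, z} : Finset ℕ) = {z, x, y} := triple_rot x y z
            exact hnot (heq ▸ hmemFs' x y hx' hy' nxy)
          · -- no vertex is v, so the triangle is in G
            have hGxy : G.Adj x y := by
              rcases hxy with h | ⟨h, -⟩ | ⟨h, -⟩
              · exact h
              · exact absurd h hx
              · exact absurd h hy
            have hGxz : G.Adj x z := by
              rcases hxz with h | ⟨h, -⟩ | ⟨h, -⟩
              · exact h
              · exact absurd h hx
              · exact absurd h hz
            have hGyz : G.Adj y z := by
              rcases hyz with h | ⟨h, -⟩ | ⟨h, -⟩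
              · exact h
              · exact absurd h hy
              · exact absurd h hz
            by_cases habc : ({x, y, z} : Finset ℕ) = ({a, b, c} : Finset ℕ)
            · -- the separated triangle: common neighbors v (new apex) and w0
              have hmemabc : ∀ u ∈ ({x, y, z} : Finset ℕ), u = a ∨ u = b ∨ u = c := by
                intro u hu
                rw [habc] at hu
                simpa using hu
              have hx3 := hmemabc x (by simp)
              have hy3 := hmemabc y (by simp)
              have hz3 := hmemabc z (by simp)
              have hw0' : ∀ u, (u = a ∨ u = b ∨ u = c) → G.Adj w0 u := by
                intro u hu
                rcases hu with rfl|rfl|rfl <;> exact hw0 u (by simp)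
              have hw0a : w0 ≠ a := (hw0' a (Or.inl rfl)).ne
              have hw0b : w0 ≠ b := (hw0' b (Or.inr (Or.inl rfl))).ne
              have hw0c : w0 ≠ c := (hw0' c (Or.inr (Or.inr rfl))).ne
              have hvw0 : v ≠ w0 := by
                rintro rfl; exact hvsupp ⟨a, hw0' a (Or.inl rfl)⟩
              refine ⟨v, w0, hvw0, ?_, hVadj x hx3, hVadj y hy3, hVadj z hz3,
                hle (hw0' x hx3), hle (hw0' y hy3), hle (hw0' z hz3)⟩
              rw [hadj']
              rintro (h | ⟨-, rfl|rfl|rfl⟩ | ⟨rfl, -⟩)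
              · exact hfresh w0 h
              · exact hw0a rfl
              · exact hw0b rfl
              · exact hw0c rfl
              · exact hvw0 rfl
            · have hnotFs : ({x, y, z} : Finset ℕ) ∉ Fs := by
                intro hmem2
                exact hnot (Or.inl ⟨hmem2, habc⟩)
              obtain ⟨v', w', hne', hnadj', h1, h2, h3, h4, h5, h6⟩ :=
                inv2 x y z hGxy hGxz hGyz hnotFs
              have hv'v : v' ≠ v := by
                rintro rfl; exact hvsupp ⟨x, h1⟩
              have hw'v : w' ≠ v := by
                rintro rfl; exact hvsupp ⟨x, h4⟩
              refine ⟨v', w', hne', ?_, hle h1, hle h2, hle h3, hle h4, hle h5, hle h6⟩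
              rw [hadj']
              rintro (h | ⟨h, -⟩ | ⟨h, -⟩)
              · exact hnadj' h
              · exact hv'v h
              · exact hw'v h
    -- Inv3
    · intro t ht s hs
      have habc_subset : ∀ s' : Finset ℕ, (∀ u ∈ s', u = a ∨ u = b ∨ u = c) →
          s' ⊆ ({a, b, c} : Finset ℕ) := by
        intro s' h u hu
        rcases h u hu with rfl|rfl|rfl <;> simp
      rcases ht with ⟨htFs, htne⟩ | htnew
      · -- old face
        have htsupp : ∀ u ∈ t, u ∈ G.support := by
          intro u hu
          obtain ⟨-, -, w, hw⟩ := inv1 t htFs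
          exact ⟨w, (hw u hu).symm⟩
        have hvt : v ∉ t := fun hvt => hvsupp (htsupp v hvt)
        have hvs : v ∉ s := fun hvs => hvt (hs hvs)
        have hseteq : G'.support \ ↑s = insert v (G.support \ ↑s) := by
          rw [hsupp']
          ext z
          simp only [Set.mem_diff, Set.mem_insert_iff]
          constructor
          · rintro ⟨rfl | hz, hzs⟩
            · exact Or.inl rfl
            · exact Or.inr ⟨hz, hzs⟩
          · rintro (rfl | ⟨hz, hzs⟩)
            · exact ⟨Or.inl rfl, fun h => hvs (by exact_mod_cast h)⟩
            · exact ⟨Or.inr hz, hzs⟩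
        have hx0 : ∃ x0, (x0 = a ∨ x0 = b ∨ x0 = c) ∧ x0 ∉ s := by
          by_contra hcon
          push_neg at hcon
          have hsub : ({a, b, c} : Finset ℕ) ⊆ t := by
            intro u hu
            apply hs
            apply hcon
            simpa using hu
          have h3 := (inv1 t htFs).1
          have := Finset.eq_of_subset_of_card_le hsub (by omega)
          exact htne this.symm
        obtain ⟨x0, hx0m, hx0s⟩ := hx0
        have hx0supp : x0 ∈ G.support := by
          rcases hx0m with rfl|rfl|rfl <;> assumption
        rw [hseteq]
        exact connected_insert G G' hle _ (inv3 t htFs s hs) v x0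
          ⟨hx0supp, fun h => hx0s (by exact_mod_cast h)⟩ (hVadj x0 hx0m)
      · -- new face {v, p, q}
        have hnf : ∀ p q r : ℕ, (p = a ∨ p = b ∨ p = c) → (q = a ∨ q = b ∨ q = c) →
            (r = a ∨ r = b ∨ r = c) → r ≠ p → r ≠ q → s ⊆ ({v, p, q} : Finset ℕ) →
            (G'.induce (G'.support \ ↑s)).Connected := by
          intro p q r hp hq hr hrp hrq hssub
          by_cases hvs : v ∈ s
          · -- v removed: graph is G with s.erase v removed (plus no v)
            set s' := s.erase v with hs'
            have hs'sub : s' ⊆ ({a, b, c} : Finset ℕ) := by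
              apply habc_subset
              intro u hu
              have hu1 := Finset.mem_of_mem_erase hu
              have hu2 := Finset.ne_of_mem_erase hu
              rcases Finset.mem_insert.mp (hssub hu1) with rfl | hu3
              · exact absurd rfl hu2
              · rcases Finset.mem_insert.mp hu3 with rfl | hu4
                · rcases hp with rfl|rfl|rfl <;> tauto
                · rw [Finset.mem_singleton] at hu4
                  subst hu4
                  rcases hq with rfl|rfl|rfl <;> tauto
            have hseteq : G'.support \ ↑s = G.support \ ↑s' := by
              rw [hsupp']
              ext z
              simp only [Set.mem_diff, Set.mem_insert_iff]
              constructor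
              · rintro ⟨rfl | hz, hzs⟩
                · exact absurd (by exact_mod_cast hvs) hzs
                · refine ⟨hz, fun h => hzs ?_⟩
                  exact_mod_cast Finset.mem_of_mem_erase (by exact_mod_cast h)
              · rintro ⟨hz, hzs'⟩
                have hzv : z ≠ v := fun h => hvsupp (h ▸ hz)
                refine ⟨Or.inr hz, fun h => hzs' ?_⟩
                exact_mod_cast Finset.mem_erase.mpr ⟨hzv, by exact_mod_cast h⟩
            rw [hseteq]
            have hconn := inv3 _ hmem s' hs'sub
            exact hconn.mono (by intro p' q' h; exact hle h)
          · -- v not removed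
            have hssub' : s ⊆ ({a, b, c} : Finset ℕ) := by
              apply habc_subset
              intro u hu
              rcases Finset.mem_insert.mp (hssub hu) with rfl | hu3
              · exact absurd hu hvs
              · rcases Finset.mem_insert.mp hu3 with rfl | hu4
                · exact hp
                · rw [Finset.mem_singleton] at hu4
                  subst hu4
                  exact hq
            have hrs : r ∉ s := by
              intro hrs
              rcases Finset.mem_insert.mp (hssub hrs) with h | hu3
              · subst h
                rcases hr with rfl|rfl|rfl <;> [exact hva rfl; exact hvb rfl; exact hvc rfl]
              · rcases Finset.mem_insert.mp hu3 with h | hu4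
                · exact hrp h
                · exact hrq (Finset.mem_singleton.mp hu4)
            have hseteq : G'.support \ ↑s = insert v (G.support \ ↑s) := by
              rw [hsupp']
              ext z
              simp only [Set.mem_diff, Set.mem_insert_iff]
              constructor
              · rintro ⟨rfl | hz, hzs⟩
                · exact Or.inl rfl
                · exact Or.inr ⟨hz, hzs⟩
              · rintro (rfl | ⟨hz, hzs⟩)
                · exact ⟨Or.inl rfl, fun h => hvs (by exact_mod_cast h)⟩
                · exact ⟨Or.inr hz, hzs⟩
            have hrsupp : r ∈ G.support := by
              rcases hr with rfl|rfl|rfl <;> assumption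
            rw [hseteq]
            exact connected_insert G G' hle _ (inv3 _ hmem s hssub') v r
              ⟨hrsupp, fun h => hrs (by exact_mod_cast h)⟩ (hVadj r hr)
        rcases htnew with rfl|rfl|rfl
        · exact hnf a b c (Or.inl rfl) (Or.inr (Or.inl rfl)) (Or.inr (Or.inr rfl))
            (Ne.symm nac) (Ne.symm nbc) hs
        · exact hnf a c b (Or.inl rfl) (Or.inr (Or.inr rfl)) (Or.inr (Or.inl rfl))
            (Ne.symm nab) nbc hs
        · exact hnf b c a (Or.inr (Or.inl rfl)) (Or.inr (Or.inr rfl)) (Or.inl rfl)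
            nab nac hs


/-- If `(v1,v2,v3)` is a separating triangle of an Apollonian network `T`,
then there exist two non-adjacent vertices `v` and `w` of `T`, each adjacent to all of
`v1`, `v2`, `v3` (yielding a `K_{2,3}` subgraph whose size-two part is non-adjacent). -/
theorem stmt_4 (T : SimpleGraph ℕ) (hT : IsApollonian T) (v1 v2 v3 : ℕ)
    (h12 : T.Adj v1 v2) (h13 : T.Adj v1 v3) (h23 : T.Adj v2 v3)
    (hsep : ¬ (T.induce (T.support \ {v1, v2, v3})).Connected) :
    ∃ v w : ℕ, v ≠ w ∧ ¬ T.Adj v w ∧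
      T.Adj v v1 ∧ T.Adj v v2 ∧ T.Adj v v3 ∧
      T.Adj w v1 ∧ T.Adj w v2 ∧ T.Adj w v3 := by
  obtain ⟨Fs, hap⟩ := hT
  have inv := apollonian_inv hap
  by_cases hmem : ({v1, v2, v3} : Finset ℕ) ∈ Fs
  · exfalso
    apply hsep
    have hconn := inv.2.2 _ hmem ({v1, v2, v3} : Finset ℕ) (Finset.Subset.refl _)
    have hco : (↑({v1, v2, v3} : Finset ℕ) : Set ℕ) = ({v1, v2, v3} : Set ℕ) := by
      simp [Finset.coe_insert]
    rwa [hco] at hconn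
  · exact inv.2.1 v1 v2 v3 h12 h13 h23 hmem
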